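/- Let m ≥ 2 be an integer. Let y_1, y_2, … ∈ {0,1} be any outcome sequence and p_1, p_2, … ∈ {M_1,…,M_m} any forecast sequence. Fix t ≥ 1 and suppose there exists j ∈ {1,…,m−1} with e_j^t > 0 and d_{j+1}^t > 0 such that p_{t+1} = M_j if y_{t+1} = 0 and p_{t+1} = M_{j+1} if y_{t+1} = 1. Let i denote the index of the realized forecast (i = j if y_{t+1} = 0, i = j+1 if y_{t+1} = 1). Then N_i^{t+1} · max(d_i^{t+1}, e_i^{t+1}) ≤ max( N_i^t · max(d_i^t, e_i^t) , 1 ). -/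
import Mathlib


namespace Calib

/-- Gridpoint M_i = (2i-1)/(2m). -/
noncomputable def Mg (m i : ℕ) : ℝ := (2 * (i : ℝ) - 1) / (2 * m)

/-- Left endpoint l_i = (i-1)/m. -/
noncomputable def lept (m i : ℕ) : ℝ := ((i : ℝ) - 1) / m

/-- Right endpoint r_i = i/m. -/
noncomputable def rept (m i : ℕ) : ℝ := (i : ℝ) / m

/-- N_i^t = #{1 ≤ s ≤ t : p_s = M_i}. -/
def Ncount (a : ℕ → ℕ) (i t : ℕ) : ℕ :=
  ((Finset.Icc 1 t).filter (fun s => a s = i)).card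

/-- Empirical average p_i^t of the outcomes on rounds where M_i was forecast. -/
noncomputable def emp (m : ℕ) (a : ℕ → ℕ) (y : ℕ → ℝ) (i t : ℕ) : ℝ :=
  if 0 < Ncount a i t then
    (∑ s ∈ Finset.Icc 1 t, if a s = i then y s else 0) / (Ncount a i t)
  else Mg m i

/-- Deficit d_i^t = l_i - p_i^t. -/
noncomputable def defc (m : ℕ) (a : ℕ → ℕ) (y : ℕ → ℝ) (i t : ℕ) : ℝ :=
  lept m i - emp m a y i t

/-- Excess e_i^t = p_i^t - r_i. -/
noncomputable def exc (m : ℕ) (a : ℕ → ℕ) (y : ℕ → ℝ) (i t : ℕ) : ℝ :=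
  emp m a y i t - rept m i

/-- Condition A at time t: some i ∈ {1,…,m} has d_i^t ≤ 0 and e_i^t ≤ 0. -/
def condA (m : ℕ) (a : ℕ → ℕ) (y : ℕ → ℝ) (t : ℕ) : Prop :=
  ∃ i, 1 ≤ i ∧ i ≤ m ∧ defc m a y i t ≤ 0 ∧ exc m a y i t ≤ 0

/-- The POTC-Cal algorithm (binary outcomes), allowing any admissible choice of
index at each step: p_1 = M_1; at time t+1, if condition A holds play a
witnessing M_i; otherwise pick i with e_i^t > 0 and d_{i+1}^t > 0 and play
M_i if y_{t+1} = 0 and M_{i+1} if y_{t+1} = 1. -/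
def POTC (m : ℕ) (a : ℕ → ℕ) (y : ℕ → ℝ) : Prop :=
  a 1 = 1 ∧
  ∀ t, 1 ≤ t →
    (∃ i, 1 ≤ i ∧ i ≤ m ∧ defc m a y i t ≤ 0 ∧ exc m a y i t ≤ 0 ∧ a (t + 1) = i) ∨
    (¬ condA m a y t ∧
      ∃ i, 1 ≤ i ∧ i ≤ m - 1 ∧ 0 < exc m a y i t ∧ 0 < defc m a y (i + 1) t ∧
        (y (t + 1) = 0 → a (t + 1) = i) ∧ (y (t + 1) = 1 → a (t + 1) = i + 1))

end Calib

namespace CalibAux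

lemma icc_succ (t : ℕ) : Finset.Icc 1 (t+1) = insert (t+1) (Finset.Icc 1 t) := by
  ext s; simp [Finset.mem_Icc]; omega

lemma Ncount_succ_self (a : ℕ → ℕ) (i t : ℕ) (h : a (t+1) = i) :
    Calib.Ncount a i (t+1) = Calib.Ncount a i t + 1 := by
  unfold Calib.Ncount
  rw [icc_succ, Finset.filter_insert, if_pos h,
    Finset.card_insert_of_notMem (by simp)]

lemma case0 (N S l r : ℝ) (hN : 0 < N) (hr : 0 ≤ r) (hlr : l < r) (hl1 : l ≤ 1)
    (he : 0 < S / N - r) :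
    (N + 1) * max (l - S / (N + 1)) (S / (N + 1) - r)
      ≤ max (N * max (l - S / N) (S / N - r)) 1 := by
  have hN1 : (0:ℝ) < N + 1 := by linarith
  have hN' : N ≠ 0 := ne_of_gt hN
  have hN1' : N + 1 ≠ 0 := ne_of_gt hN1
  have hSr : N * r < S := by
    have h1 : r < S / N := by linarith
    have := (lt_div_iff₀ hN).mp h1
    linarith
  have hmaxr : max (l - S / N) (S / N - r) = S / N - r := by
    apply max_eq_right
    have : l - S / N < 0 := by
      have : r < S / N := by linarith
      linarith
    linarith
  rw [hmaxr]
  have hNe : N * (S / N - r) = S - N * r := by field_simp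
  rcases le_total (l - S / (N + 1)) (S / (N + 1) - r) with h | h
  · rw [max_eq_right h]
    have heq : (N + 1) * (S / (N + 1) - r) = S - (N + 1) * r := by field_simp; try ring
    calc (N + 1) * (S / (N + 1) - r) = S - (N + 1) * r := heq
      _ ≤ S - N * r := by nlinarith
      _ = N * (S / N - r) := hNe.symm
      _ ≤ max (N * (S / N - r)) 1 := le_max_left _ _
  · rw [max_eq_left h]
    have heq : (N + 1) * (l - S / (N + 1)) = (N + 1) * l - S := by field_simp; try ring
    calc (N + 1) * (l - S / (N + 1)) = (N + 1) * l - S := heq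
      _ ≤ 1 := by nlinarith
      _ ≤ max (N * (S / N - r)) 1 := le_max_right _ _

lemma case1 (N S l r : ℝ) (hN : 0 < N) (hr : 0 ≤ r) (hlr : l < r) (hl1 : l ≤ 1)
    (hd : 0 < l - S / N) :
    (N + 1) * max (l - (S + 1) / (N + 1)) ((S + 1) / (N + 1) - r)
      ≤ max (N * max (l - S / N) (S / N - r)) 1 := by
  have hN1 : (0:ℝ) < N + 1 := by linarith
  have hN' : N ≠ 0 := ne_of_gt hN
  have hN1' : N + 1 ≠ 0 := ne_of_gt hN1
  have hSl : S < N * l := by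
    have h1 : S / N < l := by linarith
    have := (div_lt_iff₀ hN).mp h1
    linarith
  have hmaxl : max (l - S / N) (S / N - r) = l - S / N := by
    apply max_eq_left
    have : S / N < l := by linarith
    linarith
  rw [hmaxl]
  have hNd : N * (l - S / N) = N * l - S := by field_simp; try ring
  rcases le_total (l - (S + 1) / (N + 1)) ((S + 1) / (N + 1) - r) with h | h
  · rw [max_eq_right h]
    have heq : (N + 1) * ((S + 1) / (N + 1) - r) = S + 1 - (N + 1) * r := by
      field_simp; try ring
    calc (N + 1) * ((S + 1) / (N + 1) - r) = S + 1 - (N + 1) * r := heq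
      _ ≤ 1 := by nlinarith
      _ ≤ max (N * (l - S / N)) 1 := le_max_right _ _
  · rw [max_eq_left h]
    have heq : (N + 1) * (l - (S + 1) / (N + 1)) = (N + 1) * l - S - 1 := by
      field_simp; try ring
    calc (N + 1) * (l - (S + 1) / (N + 1)) = (N + 1) * l - S - 1 := heq
      _ ≤ N * l - S := by nlinarith
      _ = N * (l - S / N) := hNd.symm
      _ ≤ max (N * (l - S / N)) 1 := le_max_left _ _

end CalibAux

theorem potc_cal_condB_step (m : ℕ) (hm : 2 ≤ m)
    (y : ℕ → ℝ) (hy : ∀ t, y t = 0 ∨ y t = 1)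
    (a : ℕ → ℕ) (ha : ∀ t, 1 ≤ t → 1 ≤ a t ∧ a t ≤ m)
    (t : ℕ) (ht : 1 ≤ t) (j : ℕ) (hj1 : 1 ≤ j) (hjm : j ≤ m - 1)
    (he : 0 < Calib.exc m a y j t) (hd : 0 < Calib.defc m a y (j + 1) t)
    (hplay0 : y (t + 1) = 0 → a (t + 1) = j)
    (hplay1 : y (t + 1) = 1 → a (t + 1) = j + 1)
    (i : ℕ) (hi : (y (t + 1) = 0 ∧ i = j) ∨ (y (t + 1) = 1 ∧ i = j + 1)) :
    (Calib.Ncount a i (t + 1) : ℝ) *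
        max (Calib.defc m a y i (t + 1)) (Calib.exc m a y i (t + 1))
      ≤ max ((Calib.Ncount a i t : ℝ) *
          max (Calib.defc m a y i t) (Calib.exc m a y i t)) 1 := by
  have hmR : (2:ℝ) ≤ (m:ℝ) := by exact_mod_cast hm
  have hmpos : (0:ℝ) < (m:ℝ) := by linarith
  have hjm' : j ≤ m - 1 := hjm
  have hjm2 : j + 1 ≤ m := by omega
  have hjR : (j:ℝ) + 1 ≤ (m:ℝ) := by exact_mod_cast hjm2
  rcases hi with ⟨hy0, hij⟩ | ⟨hy1, hij⟩
  · rw [hij]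
    have hat : a (t + 1) = j := hplay0 hy0
    -- N positive
    have hN : 0 < Calib.Ncount a j t := by
      by_contra hN0
      have hemp : Calib.emp m a y j t = Calib.Mg m j := by
        unfold Calib.emp; rw [if_neg hN0]
      have hexc : Calib.exc m a y j t = -1 / (2 * m) := by
        unfold Calib.exc Calib.Mg Calib.rept at *
        rw [hemp]; field_simp; try ring
      rw [hexc] at he
      have : (-1:ℝ) / (2 * m) < 0 := by
        apply div_neg_of_neg_of_pos <;> linarith
      linarith
    set N : ℝ := (Calib.Ncount a j t : ℝ) with hNdef
    set S : ℝ := ∑ s ∈ Finset.Icc 1 t, (if a s = j then y s else 0) with hSdef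
    have hNpos : 0 < N := Nat.cast_pos.mpr hN
    have hempt : Calib.emp m a y j t = S / N := by
      unfold Calib.emp; rw [if_pos hN]
    have hNsucc : Calib.Ncount a j (t + 1) = Calib.Ncount a j t + 1 :=
      CalibAux.Ncount_succ_self a j t hat
    have hSsucc : ∑ s ∈ Finset.Icc 1 (t + 1), (if a s = j then y s else 0) = S := by
      rw [Finset.sum_Icc_succ_top (Nat.le_add_left 1 t), if_pos hat, hy0, add_zero]
    have hempt1 : Calib.emp m a y j (t + 1) = S / (N + 1) := by
      unfold Calib.emp
      rw [if_pos (by omega : 0 < Calib.Ncount a j (t + 1)), hSsucc, hNsucc]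
      push_cast
      rfl
    have hjR2 : (j:ℝ) ≤ (m:ℝ) := by linarith
    have key := CalibAux.case0 N S (Calib.lept m j) (Calib.rept m j) hNpos
      (by unfold Calib.rept; positivity)
      (by unfold Calib.lept Calib.rept
          rw [div_lt_div_iff₀ hmpos hmpos]; nlinarith)
      (by unfold Calib.lept
          rw [div_le_one hmpos]; linarith)
      (by unfold Calib.exc at he; rw [hempt] at he; exact he)
    unfold Calib.defc Calib.exc
    rw [hempt, hempt1, hNsucc]
    push_cast
    exact key
  · subst hij
    have hat : a (t + 1) = j + 1 := hplay1 hy1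
    have hN : 0 < Calib.Ncount a (j + 1) t := by
      by_contra hN0
      have hemp : Calib.emp m a y (j + 1) t = Calib.Mg m (j + 1) := by
        unfold Calib.emp; rw [if_neg hN0]
      have hdfc : Calib.defc m a y (j + 1) t = -1 / (2 * m) := by
        unfold Calib.defc Calib.Mg Calib.lept at *
        rw [hemp]; push_cast; field_simp; try ring
      rw [hdfc] at hd
      have : (-1:ℝ) / (2 * m) < 0 := by
        apply div_neg_of_neg_of_pos <;> linarith
      linarith
    set N : ℝ := (Calib.Ncount a (j + 1) t : ℝ) with hNdef
    set S : ℝ := ∑ s ∈ Finset.Icc 1 t, (if a s = j + 1 then y s else 0) with hSdef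
    have hNpos : 0 < N := Nat.cast_pos.mpr hN
    have hempt : Calib.emp m a y (j + 1) t = S / N := by
      unfold Calib.emp; rw [if_pos hN]
    have hNsucc : Calib.Ncount a (j + 1) (t + 1) = Calib.Ncount a (j + 1) t + 1 :=
      CalibAux.Ncount_succ_self a (j + 1) t hat
    have hSsucc : ∑ s ∈ Finset.Icc 1 (t + 1), (if a s = j + 1 then y s else 0) = S + 1 := by
      rw [Finset.sum_Icc_succ_top (Nat.le_add_left 1 t), if_pos hat, hy1]
    have hempt1 : Calib.emp m a y (j + 1) (t + 1) = (S + 1) / (N + 1) := by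
      unfold Calib.emp
      rw [if_pos (by omega : 0 < Calib.Ncount a (j + 1) (t + 1)), hSsucc, hNsucc]
      push_cast
      rfl
    have key := CalibAux.case1 N S (Calib.lept m (j + 1)) (Calib.rept m (j + 1)) hNpos
      (by unfold Calib.rept; positivity)
      (by unfold Calib.lept Calib.rept
          push_cast
          rw [div_lt_div_iff₀ hmpos hmpos]; nlinarith)
      (by unfold Calib.lept
          push_cast
          rw [div_le_one hmpos]; linarith)
      (by unfold Calib.defc at hd; rw [hempt] at hd; exact hd)
    unfold Calib.defc Calib.exc
    rw [hempt, hempt1, hNsucc]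
    push_cast
    exact key
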